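/- Let $\Omega \subset \mathbb{R}^3$ be a bounded Lipschitz domain. There is a constant $C>0$ such that for all $u, \tilde u \in H_0^1(\Omega)$: $\|\tilde u^3 - u^3 - 3u^2(\tilde u - u)\|_{H^{-1}(\Omega)} \leq C\, \|\tilde u - u\|_{L^2(\Omega)}\, \|\tilde u - u\|_{H_0^1(\Omega)}\, (\|u\|_{H_0^1(\Omega)} + \|\tilde u\|_{H_0^1(\Omega)})$. Consequently, on any bounded set of $H_0^1(\Omega)$, the first-order Taylor remainder of $\Phi(u) = u^3$ is bounded in $H^{-1}$ by a small multiple of $\|\tilde u - u\|_{L^2}$ when $\|\tilde u - u\|_{H_0^1}$ is small (tangential cone estimate). -/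

import Mathlib

open MeasureTheory
open scoped ENNReal

section Aux

variable {α : Type*} [MeasurableSpace α] {μ : Measure α}

private lemma aux_mem6 (f : α → ℝ) (hm : AEStronglyMeasurable f μ)
    (hi : Integrable (fun x => |f x| ^ (6:ℕ)) μ) : MemLp f 6 μ := by
  rw [← memLp_norm_rpow_iff (p := 6) (q := 6) hm (by norm_num) (by norm_num)]
  simp only [ENNReal.toReal_ofNat]
  rw [show (6:ℝ≥0∞)/6 = 1 from by rw [ENNReal.div_eq_one_iff] <;> norm_num,
    memLp_one_iff_integrable]
  convert hi using 2 with x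
  rw [Real.norm_eq_abs, ← Real.rpow_natCast |f x| 6]
  norm_num

end Aux

private lemma enn_half : (1:ℝ≥0∞)/2 = 1/6 + 1/3 := by
  rw [← ENNReal.toReal_eq_toReal_iff' (by norm_num) (by norm_num),
    ENNReal.toReal_add (by norm_num) (by norm_num)]
  simp [ENNReal.toReal_div]; norm_num

private lemma enn_third : (1:ℝ≥0∞)/3 = 1/6 + 1/6 := by
  rw [← ENNReal.toReal_eq_toReal_iff' (by norm_num) (by norm_num),
    ENNReal.toReal_add (by norm_num) (by norm_num)]
  simp [ENNReal.toReal_div]; norm_num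

private lemma enn_twothird : (1:ℝ≥0∞)/(3/2) = 1/3 + 1/3 := by
  rw [← ENNReal.toReal_eq_toReal_iff' (by norm_num) (by norm_num),
    ENNReal.toReal_add (by norm_num) (by norm_num)]
  simp [ENNReal.toReal_div]; norm_num

set_option maxHeartbeats 1000000 in
theorem stmt_7
    {α : Type*} [MeasurableSpace α] (μ : Measure α) [IsFiniteMeasure μ]
    {V : Type*} [NormedAddCommGroup V] [InnerProductSpace ℝ V] [CompleteSpace V]
    (ι : V →ₗ[ℝ] (α → ℝ))
    (hmeas : ∀ v : V, AEStronglyMeasurable (ι v) μ)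
    (hint6 : ∀ v : V, Integrable (fun x => |ι v x| ^ (6:ℕ)) μ)
    (C₆ : ℝ) (hC₆ : 0 < C₆)
    (hemb : ∀ v : V, ∫ x, |ι v x| ^ (6:ℕ) ∂μ ≤ (C₆ * ‖v‖) ^ (6:ℕ)) :
    ∃ C > (0:ℝ), ∀ u u' w : V, ‖w‖ ≤ 1 →
      |∫ x, ((ι u' x) ^ 3 - (ι u x) ^ 3 - 3 * (ι u x) ^ 2 * (ι u' x - ι u x)) * ι w x ∂μ|
        ≤ C * Real.sqrt (∫ x, (ι u' x - ι u x) ^ 2 ∂μ) * ‖u' - u‖ * (‖u‖ + ‖u'‖) := by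
  have hmem6 : ∀ v : V, MemLp (ι v) 6 μ := fun v => aux_mem6 _ (hmeas v) (hint6 v)
  have o2 : ENNReal.ofReal (2:ℝ) = 2 := by norm_num
  have o3 : ENNReal.ofReal (3:ℝ) = 3 := by norm_num
  have o32 : ENNReal.ofReal ((3:ℝ)/2) = 3/2 := by
    rw [ENNReal.ofReal_div_of_pos] <;> norm_num
  refine ⟨2 * C₆ ^ 3, by positivity, fun u u' w hw => ?_⟩
  set d : α → ℝ := ι (u' - u) with hd_def
  set s : α → ℝ := ι (u' + (2:ℝ) • u) with hs_def
  have hdx : ∀ x, d x = ι u' x - ι u x := fun x => by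
    rw [hd_def, map_sub]; rfl
  have hsx : ∀ x, s x = ι u' x + 2 * ι u x := fun x => by
    simp [hs_def, map_add, LinearMap.map_smul, Pi.smul_apply, smul_eq_mul]
  -- MemLp facts
  have h6d : MemLp d 6 μ := hmem6 _
  have h6s : MemLp s 6 μ := hmem6 _
  have h6w : MemLp (ι w) 6 μ := hmem6 _
  have hd2 : MemLp d 2 μ := h6d.mono_exponent (by norm_num)
  have hsw3 : MemLp (fun x => s x * ι w x) 3 μ := by
    simpa [Pi.smul_apply', smul_eq_mul, Pi.mul_def] using h6w.smul h6s (hpqr := ⟨by simp only [← one_div]; exact enn_third.symm⟩)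
  have hdsw2 : MemLp (fun x => d x * (s x * ι w x)) 2 μ := by
    simpa [Pi.smul_apply', smul_eq_mul, Pi.mul_def] using hsw3.smul h6d (hpqr := ⟨by simp only [← one_div]; exact enn_half.symm⟩)
  have hd23 : MemLp (fun x => d x ^ 2) 3 μ := by
    simpa [Pi.smul_apply', smul_eq_mul, Pi.mul_def, sq] using h6d.smul h6d (hpqr := ⟨by simp only [← one_div]; exact enn_third.symm⟩)
  have hsw232 : MemLp (fun x => (s x * ι w x) ^ 2) (3/2) μ := by
    simpa [Pi.smul_apply', smul_eq_mul, Pi.mul_def, sq] using hsw3.smul hsw3 (hpqr := ⟨by simp only [← one_div]; exact enn_twothird.symm⟩)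
  have hss3 : MemLp (fun x => s x * s x) 3 μ := by
    simpa [Pi.smul_apply', smul_eq_mul, Pi.mul_def] using h6s.smul h6s (hpqr := ⟨by simp only [← one_div]; exact enn_third.symm⟩)
  have hs32 : MemLp (fun x => s x ^ 3) 2 μ := by
    simpa [Pi.smul_apply', smul_eq_mul, Pi.mul_def, pow_succ, pow_zero, one_mul, mul_assoc]
      using hss3.smul h6s (hpqr := ⟨by simp only [← one_div]; exact enn_half.symm⟩)
  have hww3 : MemLp (fun x => ι w x * ι w x) 3 μ := by
    simpa [Pi.smul_apply', smul_eq_mul, Pi.mul_def] using h6w.smul h6w (hpqr := ⟨by simp only [← one_div]; exact enn_third.symm⟩)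
  have hw32 : MemLp (fun x => ι w x ^ 3) 2 μ := by
    simpa [Pi.smul_apply', smul_eq_mul, Pi.mul_def, pow_succ, pow_zero, one_mul, mul_assoc]
      using hww3.smul h6w (hpqr := ⟨by simp only [← one_div]; exact enn_half.symm⟩)
  -- notation for the sixth-power integrals
  set I1 : ℝ := ∫ x, |d x| ^ (6:ℕ) ∂μ with hI1
  set I2 : ℝ := ∫ x, |s x| ^ (6:ℕ) ∂μ with hI2
  set I3 : ℝ := ∫ x, |ι w x| ^ (6:ℕ) ∂μ with hI3
  have hI1nn : 0 ≤ I1 := integral_nonneg fun x => by positivity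
  have hI2nn : 0 ≤ I2 := integral_nonneg fun x => by positivity
  have hI3nn : 0 ≤ I3 := integral_nonneg fun x => by positivity
  set A : ℝ := ∫ x, (ι u' x - ι u x) ^ 2 ∂μ with hA
  have hAnn : 0 ≤ A := integral_nonneg fun x => by positivity
  -- Hölder 1
  have holder1 := integral_mul_norm_le_Lp_mul_Lq (μ := μ)
    (f := d) (g := fun x => d x * (s x * ι w x)) (p := 2) (q := 2)
    ⟨by norm_num, by norm_num, by norm_num⟩ (o2 ▸ hd2) (o2 ▸ hdsw2)
  -- Hölder 2
  have holder2 := integral_mul_norm_le_Lp_mul_Lq (μ := μ)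
    (f := fun x => d x ^ 2) (g := fun x => (s x * ι w x) ^ 2) (p := 3) (q := 3/2)
    ⟨by norm_num, by norm_num, by norm_num⟩ (o3 ▸ hd23) (o32 ▸ hsw232)
  -- Hölder 3
  have holder3 := integral_mul_norm_le_Lp_mul_Lq (μ := μ)
    (f := fun x => s x ^ 3) (g := fun x => ι w x ^ 3) (p := 2) (q := 2)
    ⟨by norm_num, by norm_num, by norm_num⟩ (o2 ▸ hs32) (o2 ▸ hw32)
  -- pointwise rewriting helpers
  have cast2 : (2:ℝ) = ((2:ℕ):ℝ) := by norm_num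
  have cast3 : (3:ℝ) = ((3:ℕ):ℝ) := by norm_num
  -- first factor of holder1 equals A
  have hfirst : ∫ x, ‖d x‖ ^ (2:ℝ) ∂μ = A := by
    rw [hA]
    refine integral_congr_ae (Filter.Eventually.of_forall fun x => ?_)
    beta_reduce
    rw [Real.norm_eq_abs, cast2, Real.rpow_natCast, sq_abs, hdx]
  -- second factor
  have hX : ∫ x, ‖d x * (s x * ι w x)‖ ^ (2:ℝ) ∂μ
      ≤ I1 ^ ((1:ℝ)/3) * (I2 ^ ((1:ℝ)/2) * I3 ^ ((1:ℝ)/2)) ^ ((2:ℝ)/3) := by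
    have hJ : ∫ x, |s x * ι w x| ^ (3:ℕ) ∂μ ≤ I2 ^ ((1:ℝ)/2) * I3 ^ ((1:ℝ)/2) := by
      calc ∫ x, |s x * ι w x| ^ (3:ℕ) ∂μ
          = ∫ x, ‖s x ^ 3‖ * ‖ι w x ^ 3‖ ∂μ := by
            refine integral_congr_ae (Filter.Eventually.of_forall fun x => ?_)
            beta_reduce
            rw [Real.norm_eq_abs, Real.norm_eq_abs, abs_pow, abs_pow, abs_mul, mul_pow]
        _ ≤ (∫ x, ‖s x ^ 3‖ ^ (2:ℝ) ∂μ) ^ ((1:ℝ)/2) * (∫ x, ‖ι w x ^ 3‖ ^ (2:ℝ) ∂μ) ^ ((1:ℝ)/2) :=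
            holder3
        _ = I2 ^ ((1:ℝ)/2) * I3 ^ ((1:ℝ)/2) := by
            rw [hI2, hI3]
            congr 2 <;>
            · refine integral_congr_ae (Filter.Eventually.of_forall fun x => ?_)
              beta_reduce
              rw [Real.norm_eq_abs, abs_pow, cast2, Real.rpow_natCast, ← pow_mul]
    calc ∫ x, ‖d x * (s x * ι w x)‖ ^ (2:ℝ) ∂μ
        = ∫ x, ‖d x ^ 2‖ * ‖(s x * ι w x) ^ 2‖ ∂μ := by
          refine integral_congr_ae (Filter.Eventually.of_forall fun x => ?_)
          beta_reduce
          rw [Real.norm_eq_abs, Real.norm_eq_abs, Real.norm_eq_abs, cast2, Real.rpow_natCast,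
            sq_abs, abs_of_nonneg (sq_nonneg (d x)),
            abs_of_nonneg (sq_nonneg (s x * ι w x)), ← mul_pow]
      _ ≤ (∫ x, ‖d x ^ 2‖ ^ (3:ℝ) ∂μ) ^ ((1:ℝ)/3)
          * (∫ x, ‖(s x * ι w x) ^ 2‖ ^ ((3:ℝ)/2) ∂μ) ^ (1/((3:ℝ)/2)) := holder2
      _ = I1 ^ ((1:ℝ)/3) * (∫ x, |s x * ι w x| ^ (3:ℕ) ∂μ) ^ ((2:ℝ)/3) := by
          rw [hI1, show (1/((3:ℝ)/2)) = (2:ℝ)/3 by norm_num]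
          congr 2
          · refine integral_congr_ae (Filter.Eventually.of_forall fun x => ?_)
            beta_reduce
            rw [Real.norm_eq_abs, cast3, Real.rpow_natCast, abs_pow, ← pow_mul]
          · refine integral_congr_ae (Filter.Eventually.of_forall fun x => ?_)
            beta_reduce
            rw [Real.norm_eq_abs, abs_pow, sq_abs, ← sq_abs, ← Real.rpow_natCast |s x * ι w x| 2,
              ← Real.rpow_mul (abs_nonneg _), ← Real.rpow_natCast |s x * ι w x| 3]
            norm_num
      _ ≤ I1 ^ ((1:ℝ)/3) * (I2 ^ ((1:ℝ)/2) * I3 ^ ((1:ℝ)/2)) ^ ((2:ℝ)/3) := by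
          gcongr
  -- collapse the nested rpow bound into sixth roots
  have hXroot : (∫ x, ‖d x * (s x * ι w x)‖ ^ (2:ℝ) ∂μ) ^ ((1:ℝ)/2)
      ≤ I1 ^ ((1:ℝ)/6) * I2 ^ ((1:ℝ)/6) * I3 ^ ((1:ℝ)/6) := by
    have hXnn : 0 ≤ ∫ x, ‖d x * (s x * ι w x)‖ ^ (2:ℝ) ∂μ :=
      integral_nonneg fun x => by positivity
    calc (∫ x, ‖d x * (s x * ι w x)‖ ^ (2:ℝ) ∂μ) ^ ((1:ℝ)/2)
        ≤ (I1 ^ ((1:ℝ)/3) * (I2 ^ ((1:ℝ)/2) * I3 ^ ((1:ℝ)/2)) ^ ((2:ℝ)/3)) ^ ((1:ℝ)/2) :=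
          Real.rpow_le_rpow hXnn hX (by norm_num)
      _ = I1 ^ ((1:ℝ)/6) * I2 ^ ((1:ℝ)/6) * I3 ^ ((1:ℝ)/6) := by
          rw [Real.mul_rpow (by positivity) (by positivity),
            ← Real.rpow_mul hI1nn,
            ← Real.rpow_mul (mul_nonneg (Real.rpow_nonneg hI2nn _) (Real.rpow_nonneg hI3nn _)),
            Real.mul_rpow (Real.rpow_nonneg hI2nn _) (Real.rpow_nonneg hI3nn _),
            ← Real.rpow_mul hI2nn, ← Real.rpow_mul hI3nn]
          norm_num
          try ring
  -- sixth-root bounds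
  have ht1 : I1 ^ ((1:ℝ)/6) ≤ C₆ * ‖u' - u‖ := by
    calc I1 ^ ((1:ℝ)/6) ≤ ((C₆ * ‖u' - u‖) ^ (6:ℕ)) ^ ((1:ℝ)/6) :=
          Real.rpow_le_rpow hI1nn (hemb (u' - u)) (by norm_num)
      _ = C₆ * ‖u' - u‖ := by
          rw [← Real.rpow_natCast (C₆ * ‖u' - u‖) 6, ← Real.rpow_mul (by positivity)]
          norm_num
  have ht2 : I2 ^ ((1:ℝ)/6) ≤ 2 * C₆ * (‖u‖ + ‖u'‖) := by
    have h1 : I2 ^ ((1:ℝ)/6) ≤ C₆ * ‖u' + (2:ℝ) • u‖ := by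
      calc I2 ^ ((1:ℝ)/6) ≤ ((C₆ * ‖u' + (2:ℝ) • u‖) ^ (6:ℕ)) ^ ((1:ℝ)/6) :=
            Real.rpow_le_rpow hI2nn (hemb (u' + (2:ℝ) • u)) (by norm_num)
        _ = C₆ * ‖u' + (2:ℝ) • u‖ := by
            rw [← Real.rpow_natCast (C₆ * ‖u' + (2:ℝ) • u‖) 6, ← Real.rpow_mul (by positivity)]
            norm_num
    refine h1.trans ?_
    have h2 : ‖u' + (2:ℝ) • u‖ ≤ ‖u'‖ + 2 * ‖u‖ := by
      refine (norm_add_le _ _).trans ?_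
      rw [norm_smul]
      simp [Real.norm_eq_abs]
    nlinarith [norm_nonneg u, norm_nonneg u']
  have ht3 : I3 ^ ((1:ℝ)/6) ≤ C₆ := by
    calc I3 ^ ((1:ℝ)/6) ≤ ((C₆ * ‖w‖) ^ (6:ℕ)) ^ ((1:ℝ)/6) :=
          Real.rpow_le_rpow hI3nn (hemb w) (by norm_num)
      _ = C₆ * ‖w‖ := by
          rw [← Real.rpow_natCast (C₆ * ‖w‖) 6, ← Real.rpow_mul (by positivity)]
          norm_num
      _ ≤ C₆ := by nlinarith
  -- main chain
  calc |∫ x, ((ι u' x) ^ 3 - (ι u x) ^ 3 - 3 * (ι u x) ^ 2 * (ι u' x - ι u x)) * ι w x ∂μ|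
      ≤ ∫ x, |((ι u' x) ^ 3 - (ι u x) ^ 3 - 3 * (ι u x) ^ 2 * (ι u' x - ι u x)) * ι w x| ∂μ := by
        exact norm_integral_le_integral_norm
          (μ := μ) (fun x => ((ι u' x) ^ 3 - (ι u x) ^ 3
            - 3 * (ι u x) ^ 2 * (ι u' x - ι u x)) * ι w x)
    _ = ∫ x, ‖d x‖ * ‖d x * (s x * ι w x)‖ ∂μ := by
        refine integral_congr_ae (Filter.Eventually.of_forall fun x => ?_)
        beta_reduce
        rw [Real.norm_eq_abs, Real.norm_eq_abs, ← abs_mul]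
        congr 1
        rw [hdx, hsx]; ring
    _ ≤ (∫ x, ‖d x‖ ^ (2:ℝ) ∂μ) ^ ((1:ℝ)/2)
        * (∫ x, ‖d x * (s x * ι w x)‖ ^ (2:ℝ) ∂μ) ^ ((1:ℝ)/2) := holder1
    _ ≤ Real.sqrt A * (I1 ^ ((1:ℝ)/6) * I2 ^ ((1:ℝ)/6) * I3 ^ ((1:ℝ)/6)) := by
        rw [hfirst, ← Real.sqrt_eq_rpow]
        exact mul_le_mul_of_nonneg_left hXroot (Real.sqrt_nonneg _)
    _ ≤ Real.sqrt A * ((C₆ * ‖u' - u‖) * (2 * C₆ * (‖u‖ + ‖u'‖)) * C₆) := by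
        gcongr <;> positivity
    _ = 2 * C₆ ^ 3 * Real.sqrt A * ‖u' - u‖ * (‖u‖ + ‖u'‖) := by ring
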